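/- For every prime p and every m ≥ 2, the polynomial f(x) = x^m + p is irreducible with values at integers relatively prime (PPI), attains the value p only at x = 0, and no translate f(x - b) with b ∈ ℤ belongs to 𝓕_p; in particular, for b ≥ 1 the translate g(x) = f(x - b) satisfies b < mb(g), so the prime value p of g at x = b occurs below its minimum base. -/

import Mathlib

def IsDigit (a : ℕ) (q : Polynomial ℤ) : Prop :=
  (∃ j : ℕ, j < a ∧ q = Polynomial.C (j : ℤ)) ∨
  (∃ j : ℕ, 1 ≤ j ∧ j ≤ a ∧ q = Polynomial.X - Polynomial.C (j : ℤ))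

def IsBaseXRep (a : ℕ) (f : Polynomial ℤ) (m : ℕ) (d : ℕ → Polynomial ℤ) : Prop :=
  (∀ i, IsDigit a (d i)) ∧ d m ≠ 0 ∧ (∀ i, m < i → d i = 0) ∧
  f = ∑ i ∈ Finset.range (m + 1), d i * Polynomial.X ^ i

noncomputable def mb (f : Polynomial ℤ) : ℕ :=
  sInf {a : ℕ | 0 < a ∧ ∃ m d, IsBaseXRep a f m d}

open Polynomial Finset

/-- carry sequence for the base-X digit algorithm -/
noncomputable def carry (f : Polynomial ℤ) : ℕ → ℤ
  | 0 => 0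
  | k+1 => if f.coeff k - carry f k < 0 then 1 else 0

noncomputable def tdig (f : Polynomial ℤ) (k : ℕ) : ℤ := f.coeff k - carry f k

noncomputable def digit (f : Polynomial ℤ) (k : ℕ) : Polynomial ℤ :=
  if tdig f k < 0 then X - C (-(tdig f k)) else C (tdig f k)

lemma carry_mem (f : Polynomial ℤ) (k : ℕ) : carry f k = 0 ∨ carry f k = 1 := by
  cases k with
  | zero => left; rfl
  | succ k => unfold carry; split <;> simp

lemma carry_nonneg (f : Polynomial ℤ) (k : ℕ) : 0 ≤ carry f k := by
  rcases carry_mem f k with h | h <;> omega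

lemma carry_le_one (f : Polynomial ℤ) (k : ℕ) : carry f k ≤ 1 := by
  rcases carry_mem f k with h | h <;> omega

lemma tdig_def (f : Polynomial ℤ) (k : ℕ) : tdig f k = f.coeff k - carry f k := rfl

lemma carry_succ (f : Polynomial ℤ) (k : ℕ) :
    carry f (k+1) = if f.coeff k - carry f k < 0 then 1 else 0 := rfl

lemma digit_mul (f : Polynomial ℤ) (k : ℕ) :
    digit f k * X ^ k = C (tdig f k) * X ^ k + C (carry f (k+1)) * X ^ (k+1) := by
  unfold digit
  rw [carry_succ, tdig_def]
  by_cases h : f.coeff k - carry f k < 0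
  · rw [if_pos h, if_pos h, map_neg, C_1]
    ring
  · rw [if_neg h, if_neg h, map_zero]
    ring

lemma carry_top (f : Polynomial ℤ) (hf : 0 < f.leadingCoeff) (j : ℕ) :
    carry f (f.natDegree + 1 + j) = 0 := by
  induction j with
  | zero =>
    show carry f (f.natDegree + 1) = 0
    unfold carry
    have h1 : f.coeff f.natDegree = f.leadingCoeff := rfl
    have h2 := carry_le_one f f.natDegree
    rw [if_neg]
    omega
  | succ j ih =>
    have : f.natDegree + 1 + (j + 1) = (f.natDegree + 1 + j) + 1 := by ring
    rw [this]
    unfold carry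
    rw [ih]
    have : f.coeff (f.natDegree + 1 + j) = 0 :=
      f.coeff_eq_zero_of_natDegree_lt (by omega)
    rw [this, if_neg (by omega)]

lemma carry_gt (f : Polynomial ℤ) (hf : 0 < f.leadingCoeff) (k : ℕ) (hk : f.natDegree < k) :
    carry f k = 0 := by
  obtain ⟨j, rfl⟩ : ∃ j, k = f.natDegree + 1 + j := ⟨k - f.natDegree - 1, by omega⟩
  exact carry_top f hf j

lemma tdig_gt (f : Polynomial ℤ) (hf : 0 < f.leadingCoeff) (k : ℕ) (hk : f.natDegree < k) :
    tdig f k = 0 := by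
  unfold tdig
  rw [carry_gt f hf k hk, f.coeff_eq_zero_of_natDegree_lt hk, sub_zero]

lemma digit_gt (f : Polynomial ℤ) (hf : 0 < f.leadingCoeff) (k : ℕ) (hk : f.natDegree < k) :
    digit f k = 0 := by
  unfold digit
  rw [tdig_gt f hf k hk, if_neg (by omega), map_zero]

lemma digit_sum (f : Polynomial ℤ) (hf : 0 < f.leadingCoeff) :
    f = ∑ i ∈ Finset.range (f.natDegree + 1), digit f i * X ^ i := by
  have key : ∀ i, digit f i * X ^ i = C (tdig f i) * X ^ i + C (carry f (i+1)) * X ^ (i+1) :=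
    digit_mul f
  calc f = ∑ i ∈ Finset.range (f.natDegree + 1), C (f.coeff i) * X ^ i :=
        f.as_sum_range_C_mul_X_pow
    _ = ∑ i ∈ Finset.range (f.natDegree + 1),
          (C (tdig f i) * X ^ i + C (carry f (i+1)) * X ^ (i+1)) := by
        rw [Finset.sum_add_distrib]
        have N := f.natDegree
        have e1 := Finset.sum_range_succ' (fun i => C (carry f i) * X ^ i) (f.natDegree + 1)
        have e2 := Finset.sum_range_succ (fun i => C (carry f i) * X ^ i) (f.natDegree + 1)
        have e3 : carry f (f.natDegree + 1) = 0 := carry_top f hf 0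
        have e4 : carry f 0 = 0 := rfl
        simp only [e3, e4, map_zero, zero_mul, add_zero] at e1 e2
        have h2 : ∑ i ∈ Finset.range (f.natDegree + 1), C (carry f (i+1)) * X ^ (i+1)
            = ∑ i ∈ Finset.range (f.natDegree + 1), C (carry f i) * X ^ i := by
          rw [← e2, e1]
        rw [h2, ← Finset.sum_add_distrib]
        apply Finset.sum_congr rfl
        intro i _
        rw [← add_mul, ← C_add]
        unfold tdig
        ring_nf
    _ = ∑ i ∈ Finset.range (f.natDegree + 1), digit f i * X ^ i := by
        apply Finset.sum_congr rfl
        intro i _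
        rw [key]

lemma tdig_le (f : Polynomial ℤ) (k : ℕ) :
    f.coeff k - 1 ≤ tdig f k ∧ tdig f k ≤ f.coeff k := by
  rw [tdig_def]
  have := carry_mem f k
  omega

lemma isDigit_digit (f : Polynomial ℤ) (a : ℕ) (k : ℕ)
    (ha : (f.coeff k).natAbs + 2 ≤ a) : IsDigit a (digit f k) := by
  have h1 := tdig_le f k
  have h3 : ((f.coeff k).natAbs : ℤ) + 2 ≤ (a : ℤ) := by exact_mod_cast ha
  have habs3 : -((a:ℤ) - 2) ≤ f.coeff k ∧ f.coeff k ≤ (a:ℤ) - 2 := by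
    have h5 : f.coeff k ≤ ((f.coeff k).natAbs : ℤ) := Int.le_natAbs
    have h6 : -((f.coeff k).natAbs : ℤ) ≤ f.coeff k := by
      rcases Int.natAbs_eq (f.coeff k) with h | h <;> omega
    constructor <;> omega
  unfold digit
  by_cases h : tdig f k < 0
  · right
    refine ⟨(-(tdig f k)).toNat, ?_, ?_, ?_⟩
    · omega
    · have : -(tdig f k) ≤ (a : ℤ) := by omega
      omega
    · rw [if_pos h]
      congr 1
      congr 1
      omega
  · left
    refine ⟨(tdig f k).toNat, ?_, ?_⟩
    · have : tdig f k < (a : ℤ) := by omega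
      omega
    · rw [if_neg h]
      congr 1
      omega

lemma exists_rep (f : Polynomial ℤ) (hf : 0 < f.leadingCoeff) (a : ℕ)
    (ha : ∀ k, (f.coeff k).natAbs + 2 ≤ a) : ∃ M d, IsBaseXRep a f M d := by
  have hdig : ∀ k, IsDigit a (digit f k) := fun k => isDigit_digit f a k (ha k)
  by_cases hd : digit f f.natDegree = 0
  · -- top digit vanishes; use natDegree - 1
    have hnotneg : ¬ tdig f f.natDegree < 0 := by
      intro h
      apply X_sub_C_ne_zero (-(tdig f f.natDegree))
      rw [← (if_pos h : (if tdig f f.natDegree < 0 then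
        X - C (-(tdig f f.natDegree)) else C (tdig f f.natDegree)) = _)]
      exact hd
    have htd0 : tdig f f.natDegree = 0 := by
      by_contra h
      apply h
      have : digit f f.natDegree = C (tdig f f.natDegree) := if_neg hnotneg
      rw [this] at hd
      exact_mod_cast (C_eq_zero.mp hd)
    have hlc : f.coeff f.natDegree = f.leadingCoeff := rfl
    have hcN : carry f f.natDegree = 1 := by
      rw [tdig_def] at htd0
      have := carry_le_one f f.natDegree
      omega
    have hN1 : 1 ≤ f.natDegree := by
      by_contra h
      have : f.natDegree = 0 := by omega
      rw [this] at hcN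
      exact absurd hcN (by simp [carry])
    have hprev : tdig f (f.natDegree - 1) < 0 := by
      have := carry_succ f (f.natDegree - 1)
      rw [show f.natDegree - 1 + 1 = f.natDegree by omega, hcN] at this
      rw [tdig_def]
      by_contra h
      rw [if_neg h] at this
      omega
    have hdprev : digit f (f.natDegree - 1) ≠ 0 := by
      unfold digit
      rw [if_pos hprev]
      exact X_sub_C_ne_zero _
    refine ⟨f.natDegree - 1, digit f, hdig, hdprev, ?_, ?_⟩
    · intro i hi
      rcases Nat.lt_or_ge i f.natDegree with h | h
      · have : i = f.natDegree := by omega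
        rw [this]; exact hd
      · rcases Nat.eq_or_lt_of_le h with h' | h'
        · rw [← h']; exact hd
        · exact digit_gt f hf i h'
    · have := digit_sum f hf
      rw [Finset.sum_range_succ, hd, zero_mul, add_zero] at this
      rw [show f.natDegree - 1 + 1 = f.natDegree by omega]
      exact this
  · refine ⟨f.natDegree, digit f, hdig, hd, fun i hi => digit_gt f hf i hi, digit_sum f hf⟩

lemma rep_coeff_lower {a M : ℕ} {d : ℕ → Polynomial ℤ} {g : Polynomial ℤ}
    (h : IsBaseXRep a g M d) (k : ℕ) : -(a : ℤ) ≤ g.coeff k := by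
  obtain ⟨hdig, -, -, hsum⟩ := h
  rw [hsum, Polynomial.finset_sum_coeff]
  have hterm : ∀ i ∈ Finset.range (M+1),
      (if i = k then -(a:ℤ) else 0) ≤ (d i * X ^ i).coeff k := by
    intro i _
    rcases hdig i with ⟨j, hj, hd⟩ | ⟨j, hj1, hja, hd⟩
    · rw [hd, coeff_C_mul_X_pow]
      split_ifs <;> omega
    · rw [hd, sub_mul, ← pow_succ', coeff_sub, coeff_X_pow, coeff_C_mul_X_pow]
      have hja' : (j : ℤ) ≤ (a : ℤ) := by exact_mod_cast hja
      split_ifs <;> omega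
  calc -(a:ℤ) ≤ ∑ i ∈ Finset.range (M+1), (if i = k then -(a:ℤ) else 0) := by
        rw [Finset.sum_ite_eq' (Finset.range (M+1)) k (fun _ => -(a:ℤ))]
        split_ifs <;> omega
    _ ≤ _ := Finset.sum_le_sum hterm

lemma mb_pos_and_rep {g : Polynomial ℤ} (hg : 0 < g.leadingCoeff) :
    0 < mb g ∧ ∃ M d, IsBaseXRep (mb g) g M d := by
  have hne : {a : ℕ | 0 < a ∧ ∃ M d, IsBaseXRep a g M d}.Nonempty := by
    set B := (Finset.range (g.natDegree + 1)).sup (fun k => (g.coeff k).natAbs) with hB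
    refine ⟨B + 2, by omega, exists_rep g hg (B + 2) ?_⟩
    intro k
    rcases Nat.lt_or_ge k (g.natDegree + 1) with h | h
    · have h2 : (g.coeff k).natAbs ≤ B :=
        Finset.le_sup (f := fun k => (g.coeff k).natAbs) (Finset.mem_range.mpr h)
      exact Nat.add_le_add_right h2 2
    · rw [g.coeff_eq_zero_of_natDegree_lt (by omega)]
      simp
  have := Nat.sInf_mem hne
  exact ⟨this.1, this.2⟩

/-- Positive, proper, irreducible polynomial: positive leading coefficient, no
prime divides all integer values, and irreducible in ℤ[x]. -/
def PPI (f : Polynomial ℤ) : Prop :=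
  0 < f.leadingCoeff ∧ (∀ q : ℤ, Prime q → ∃ n : ℤ, ¬ q ∣ f.eval n) ∧ Irreducible f

/-- The family 𝓕_p of irreducible polynomials associated with the prime p:
the constant p, the p-th cyclotomic polynomial, and every PPI polynomial taking
the value p at some integer b ≥ its minimum base. -/
def Fam (p : ℕ) : Set (Polynomial ℤ) :=
  {f | f = Polynomial.C (p : ℤ) ∨ f = Polynomial.cyclotomic p ℤ ∨
    (PPI f ∧ ∃ b : ℤ, (mb f : ℤ) ≤ b ∧ f.eval b = (p : ℤ))}

/-- For every prime p and m ≥ 2, f = x^m + p is PPI, attains the value p only at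
x = 0, no translate f(x - b) lies in 𝓕_p, and for b ≥ 1 the translate attains p
at x = b strictly below its minimum base. -/
theorem translate_not_in_Fam (p : ℕ) (hp : p.Prime) (m : ℕ) (hm : 2 ≤ m) :
    PPI (Polynomial.X ^ m + Polynomial.C (p : ℤ)) ∧
    (∀ x : ℤ, (Polynomial.X ^ m + Polynomial.C (p : ℤ)).eval x = (p : ℤ) ↔ x = 0) ∧
    (∀ b : ℤ,
      (Polynomial.X ^ m + Polynomial.C (p : ℤ)).comp (Polynomial.X - Polynomial.C b) ∉ Fam p) ∧
    (∀ b : ℤ, 1 ≤ b →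
      b < (mb ((Polynomial.X ^ m + Polynomial.C (p : ℤ)).comp (Polynomial.X - Polynomial.C b)) : ℤ)) := by
  set f : Polynomial ℤ := X ^ m + C (p : ℤ) with hf
  have hm0 : m ≠ 0 := by omega
  have hfm : f.Monic := monic_X_pow_add_C _ hm0
  have hfN : f.natDegree = m := natDegree_X_pow_add_C
  have hpz : (p : ℤ) ≠ 0 := by exact_mod_cast hp.ne_zero
  have hpZ : Prime (p : ℤ) := Int.prime_iff_natAbs_prime.mpr (by simpa using hp)
  have hfc : ∀ n : ℕ, f.coeff n = (if n = m then 1 else 0) + (if n = 0 then (p:ℤ) else 0) := by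
    intro n
    rw [hf, coeff_add, coeff_X_pow, coeff_C]
  have heval : ∀ x : ℤ, f.eval x = x ^ m + (p : ℤ) := by
    intro x; rw [hf]; simp
  -- PPI f
  have hPPI : PPI f := by
    refine ⟨by rw [hfm.leadingCoeff]; norm_num, ?_, ?_⟩
    · intro q hq
      by_contra h
      push_neg at h
      have h0 := h 0
      have h1 := h 1
      rw [heval 0, zero_pow hm0, zero_add] at h0
      rw [heval 1, one_pow] at h1
      have : q ∣ 1 := (dvd_add_right h0).mp (by rwa [add_comm] at h1)
      exact hq.not_unit (isUnit_of_dvd_one this)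
    · apply irreducible_of_eisenstein_criterion
        (P := Ideal.span {(p : ℤ)})
      · exact (Ideal.span_singleton_prime hpz).mpr hpZ
      · rw [hfm.leadingCoeff]
        intro hmem
        rw [Ideal.mem_span_singleton] at hmem
        exact hpZ.not_unit (isUnit_of_dvd_one hmem)
      · intro n hn
        have hdeg : f.degree = (m : WithBot ℕ) := by
          rw [degree_eq_natDegree hfm.ne_zero, hfN]
        rw [hdeg] at hn
        have hnm : n < m := by exact_mod_cast hn
        rw [hfc n, if_neg (by omega)]
        by_cases h0 : n = 0
        · rw [if_pos h0, zero_add]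
          exact Ideal.mem_span_singleton_self _
        · rw [if_neg h0, zero_add]
          exact Ideal.zero_mem _
      · have hdeg : f.degree = (m : WithBot ℕ) := by
          rw [degree_eq_natDegree hfm.ne_zero, hfN]
        rw [hdeg]
        exact_mod_cast Nat.pos_of_ne_zero hm0
      · rw [hfc 0, if_neg (by omega), if_pos rfl, zero_add]
        rw [Ideal.span_singleton_pow, Ideal.mem_span_singleton]
        intro hdvd
        have : (p:ℤ) * (p:ℤ) ∣ (p:ℤ) * 1 := by
          rwa [mul_one, ← sq]
        have h2 : (p:ℤ) ∣ 1 := (mul_dvd_mul_iff_left hpz).mp this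
        exact hpZ.not_unit (isUnit_of_dvd_one h2)
      · exact hfm.isPrimitive
  -- eval characterization
  have hEval : ∀ x : ℤ, f.eval x = (p : ℤ) ↔ x = 0 := by
    intro x
    rw [heval x]
    constructor
    · intro h
      have : x ^ m = 0 := by linarith
      exact pow_eq_zero_iff hm0 |>.mp this
    · rintro rfl
      rw [zero_pow hm0, zero_add]
  -- translate facts
  have hgm : ∀ b : ℤ, (f.comp (X - C b)).Monic := fun b =>
    hfm.comp (monic_X_sub_C b) (by rw [natDegree_X_sub_C]; omega)
  have hgN : ∀ b : ℤ, (f.comp (X - C b)).natDegree = m := fun b => by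
    rw [natDegree_comp, natDegree_X_sub_C, mul_one, hfN]
  have hgeq : ∀ b : ℤ, f.comp (X - C b) = (X - C b) ^ m + C (p : ℤ) := fun b => by
    rw [hf, add_comp, pow_comp, X_comp, C_comp]
  have hgcoeff : ∀ b : ℤ, (f.comp (X - C b)).coeff (m - 1) = -(m * b) := by
    intro b
    rw [hgeq b, coeff_add, coeff_C, if_neg (by omega), add_zero]
    have : (X : Polynomial ℤ) - C b = X + C (-b) := by rw [map_neg]; ring
    rw [this, coeff_X_add_C_pow]
    have hch : m.choose (m-1) = m := by
      rw [Nat.choose_symm (by omega : 1 ≤ m), Nat.choose_one_right]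
    rw [show m - (m - 1) = 1 by omega, hch, pow_one]
    ring
  have hgeval : ∀ b x : ℤ, (f.comp (X - C b)).eval x = (x - b) ^ m + (p : ℤ) := by
    intro b x
    rw [eval_comp, eval_sub, eval_X, eval_C, heval]
  -- part 4
  have h4 : ∀ b : ℤ, 1 ≤ b → b < (mb (f.comp (X - C b)) : ℤ) := by
    intro b hb
    have hlc : 0 < (f.comp (X - C b)).leadingCoeff := by
      rw [(hgm b).leadingCoeff]; norm_num
    obtain ⟨hpos, M, d, hrep⟩ := mb_pos_and_rep hlc
    have hlow := rep_coeff_lower hrep (m - 1)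
    rw [hgcoeff b] at hlow
    have hmb : (m : ℤ) * b ≤ (mb (f.comp (X - C b)) : ℤ) := by
      linarith
    have : (m : ℤ) ≥ 2 := by exact_mod_cast hm
    nlinarith
  refine ⟨hPPI, hEval, ?_, h4⟩
  -- part 3
  intro b hmem
  have hmbpos : 0 < mb (f.comp (X - C b)) := by
    have hlc : 0 < (f.comp (X - C b)).leadingCoeff := by
      rw [(hgm b).leadingCoeff]; norm_num
    exact (mb_pos_and_rep hlc).1
  rcases hmem with h | h | ⟨-, b', hb1, hb2⟩
  · -- C p
    have := congrArg Polynomial.natDegree h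
    rw [hgN b, natDegree_C] at this
    omega
  · -- cyclotomic
    haveI : Fact p.Prime := ⟨hp⟩
    have hdeg := congrArg Polynomial.natDegree h
    rw [hgN b, natDegree_cyclotomic, Nat.totient_prime hp] at hdeg
    have hco := congrArg (fun q => Polynomial.coeff q (m - 1)) h
    rw [hgcoeff b, cyclotomic_prime, Polynomial.finset_sum_coeff] at hco
    have hsum : ∑ i ∈ Finset.range p, (X ^ i : Polynomial ℤ).coeff (m-1) = 1 := by
      have : ∀ i ∈ Finset.range p, (X ^ i : Polynomial ℤ).coeff (m-1)
          = if i = m - 1 then 1 else 0 := by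
        intro i _
        rw [coeff_X_pow]
        split_ifs with h1 h2 h3 <;> first | rfl | omega
      rw [Finset.sum_congr rfl this, Finset.sum_ite_eq' (Finset.range p) (m-1) (fun _ => (1:ℤ))]
      rw [if_pos (Finset.mem_range.mpr (by omega))]
    rw [hsum] at hco
    have hdvd : (m : ℤ) ∣ 1 := ⟨-b, by linarith⟩
    have := Int.le_of_dvd one_pos hdvd
    have : (2 : ℤ) ≤ (m : ℤ) := by exact_mod_cast hm
    omega
  · -- PPI case
    have hb : b' = b := by
      rw [hgeval b b'] at hb2
      have : (b' - b) ^ m = 0 := by linarith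
      have := pow_eq_zero_iff hm0 |>.mp this
      omega
    rw [hb] at hb1
    have hb1' : 1 ≤ b := by
      have : (1 : ℤ) ≤ (mb (f.comp (X - C b)) : ℤ) := by exact_mod_cast hmbpos
      linarith
    have := h4 b hb1'
    omega
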